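/- Let R be an associative ring with 1 (in particular commutative), I an ideal, n ≥ 3, v ∈ E_n(R,I)·e_1, and w ∈ I^n a column vector with w^t v = 0. Then I_n + v·w^t ∈ E_n(R,I). -/

import Mathlib

open Matrix

section Aux

variable {n : ℕ} {R : Type} [Ring R]

private lemma myMul_vecMulVec (A : Matrix (Fin n) (Fin n) R) (x y : Fin n → R) :
    A * vecMulVec x y = vecMulVec (A.mulVec x) y := by
  ext i j
  simp [Matrix.mul_apply, vecMulVec_apply, Matrix.mulVec, dotProduct,
    Finset.sum_mul, mul_assoc]

private lemma myVecMulVec_mul (A : Matrix (Fin n) (Fin n) R) (x y : Fin n → R) :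
    vecMulVec x y * A = vecMulVec x (Matrix.vecMul y A) := by
  ext i j
  simp [Matrix.mul_apply, vecMulVec_apply, Matrix.vecMul, dotProduct,
    Finset.mul_sum, mul_assoc]

private lemma myVecMulVec_mul_vecMulVec (x y z t : Fin n → R) :
    vecMulVec x y * vecMulVec z t
      = vecMulVec x (fun j => (dotProduct y z) * t j) := by
  ext i j
  simp [Matrix.mul_apply, vecMulVec_apply, dotProduct, Finset.sum_mul,
    Finset.mul_sum, mul_assoc]

/-- `M f = e_{i0} · fᵗ`. -/
private def Mv (i0 : Fin n) (f : Fin n → R) : Matrix (Fin n) (Fin n) R :=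
  vecMulVec (Pi.single i0 (1 : R)) f

private lemma Mv_mul_Mv (i0 : Fin n) (f g : Fin n → R) (hf : f i0 = 0) :
    Mv i0 f * Mv i0 g = 0 := by
  rw [Mv, Mv, myVecMulVec_mul_vecMulVec]
  ext i j
  simp [vecMulVec_apply, dotProduct_single, hf]

private lemma Mv_add (i0 : Fin n) (f g : Fin n → R) :
    Mv i0 (f + g) = Mv i0 f + Mv i0 g := by
  ext i j
  simp [Mv, vecMulVec_apply, mul_add]

private lemma one_add_Mv_mul (i0 : Fin n) (f g : Fin n → R) (hf : f i0 = 0) :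
    (1 + Mv i0 f) * (1 + Mv i0 g) = 1 + Mv i0 (f + g) := by
  have h := Mv_mul_Mv i0 f g hf
  have : (1 + Mv i0 f) * (1 + Mv i0 g)
      = 1 + (Mv i0 f + Mv i0 g) + Mv i0 f * Mv i0 g := by noncomm_ring
  rw [this, h, add_zero, Mv_add]

private lemma Mv_zero (i0 : Fin n) : Mv i0 (0 : Fin n → R) = 0 := by
  ext i j; simp [Mv, vecMulVec_apply]

/-- The unit `1 + e_{i0} fᵗ` when `f i0 = 0`. -/
private def uMv (i0 : Fin n) (f : Fin n → R) (hf : f i0 = 0) :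
    (Matrix (Fin n) (Fin n) R)ˣ where
  val := 1 + Mv i0 f
  inv := 1 + Mv i0 (-f)
  val_inv := by
    rw [one_add_Mv_mul i0 f (-f) hf, add_neg_cancel, Mv_zero, add_zero]
  inv_val := by
    rw [one_add_Mv_mul i0 (-f) f (by simp [hf]), neg_add_cancel, Mv_zero, add_zero]

private lemma Mv_single (i0 a : Fin n) (x : R) :
    Mv i0 (Pi.single a x) = Matrix.single i0 a x := by
  ext i j
  simp [Mv, vecMulVec_apply, Pi.single_apply, Matrix.single, ite_and, eq_comm]
  split <;> split <;> simp_all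

end Aux
/-- Elementary generators `e_{ij}(x)`, `x ∈ J`, over a (possibly noncommutative)
ring with a two-sided ideal `J`. -/
def elemGens (n : ℕ) (S : Type) [Ring S] (J : TwoSidedIdeal S) :
    Set (Matrix (Fin n) (Fin n) S)ˣ :=
  {g | ∃ i j : Fin n, i ≠ j ∧ ∃ x ∈ J,
    g.val = 1 + Matrix.single i j x}

/-- The elementary subgroup `E_n(S)`. -/
def En (n : ℕ) (S : Type) [Ring S] : Subgroup (Matrix (Fin n) (Fin n) S)ˣ :=
  Subgroup.closure (elemGens n S ⊤)

/-- The relative elementary subgroup `E_n(S, J)`: the normal closure of `E_n(J)`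
in `E_n(S)`. -/
def relEn (n : ℕ) (S : Type) [Ring S] (J : TwoSidedIdeal S) :
    Subgroup (Matrix (Fin n) (Fin n) S)ˣ :=
  Subgroup.closure
    {h | ∃ ε ∈ En n S, ∃ g ∈ Subgroup.closure (elemGens n S J), h = ε * g * ε⁻¹}

section Aux2

variable {n : ℕ} {R : Type} [Ring R]

/-- A row transvection `1 + e_{i0} fᵗ` with `f` supported away from `i0` and with
entries in `I` lies in the closure of the elementary generators of level `I`. -/
private lemma row_transvection_mem (I : TwoSidedIdeal R) (i0 : Fin n)
    (s : Finset (Fin n)) :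
    ∀ f : Fin n → R, i0 ∉ s → (∀ j, j ∉ s → f j = 0) → (∀ j, f j ∈ I) →
    ∀ u : (Matrix (Fin n) (Fin n) R)ˣ, u.val = 1 + Mv i0 f →
    u ∈ Subgroup.closure (elemGens n R I) := by
  induction s using Finset.induction_on with
  | empty =>
    intro f _ hsupp _ u hu
    have hf : f = 0 := funext fun j => hsupp j (Finset.notMem_empty j)
    have : u = 1 := Units.ext (by rw [hu, hf, Mv_zero, add_zero]; rfl)
    rw [this]; exact one_mem _
  | insert a s ha ih =>
    intro f hi0 hsupp hI u hu
    have hai0 : a ≠ i0 := fun h => hi0 (h ▸ Finset.mem_insert_self a s)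
    have hfi0 : f i0 = 0 := hsupp i0 hi0
    set f1 : Fin n → R := Pi.single a (f a) with hf1def
    set f2 : Fin n → R := Function.update f a 0 with hf2def
    have hf1i0 : f1 i0 = 0 := Pi.single_eq_of_ne (Ne.symm hai0) _
    have hf2i0 : f2 i0 = 0 := by
      rw [hf2def, Function.update_of_ne (Ne.symm hai0), hfi0]
    have hsum : f1 + f2 = f := by
      funext j
      by_cases hja : j = a
      · subst hja; simp [hf1def, hf2def]
      · simp [hf1def, hf2def, Pi.single_eq_of_ne hja, Function.update_of_ne hja]
    set u1 := uMv i0 f1 hf1i0 with hu1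
    set u2 := uMv i0 f2 hf2i0 with hu2
    have key : u = u1 * u2 := by
      apply Units.ext
      show u.val = u1.val * u2.val
      rw [hu]
      show _ = (1 + Mv i0 f1) * (1 + Mv i0 f2)
      rw [one_add_Mv_mul i0 f1 f2 hf1i0, hsum]
    rw [key]
    refine mul_mem ?_ (ih f2 (fun h => hi0 (Finset.mem_insert_of_mem h))
      (fun j hj => ?_) (fun j => ?_) u2 rfl)
    · apply Subgroup.subset_closure
      refine ⟨i0, a, Ne.symm hai0, f a, hI a, ?_⟩
      show 1 + Mv i0 f1 = _
      rw [hf1def, Mv_single]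
    · by_cases hja : j = a
      · subst hja; simp [hf2def]
      · rw [hf2def, Function.update_of_ne hja]
        exact hsupp j (by simp [hja, hj])
    · by_cases hja : j = a
      · subst hja; simp only [hf2def, Function.update_self]; exact I.zero_mem
      · rw [hf2def, Function.update_of_ne hja]; exact hI j

end Aux2

/-- If `v ∈ E_n(R,I)·e_1` and `w ∈ I^n` with `wᵗv = 0`, then
`I_n + v·wᵗ ∈ E_n(R,I)`. -/
theorem transvection_in_relElementary (n : ℕ) (hn : 3 ≤ n) (R : Type) [Ring R]
    (I : TwoSidedIdeal R) (v w : Fin n → R)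
    (hv : ∃ ε ∈ relEn n R I,
      v = ε.val.mulVec (Pi.single (⟨0, by omega⟩ : Fin n) 1))
    (hw : ∀ k, w k ∈ I)
    (hvw : dotProduct w v = 0) :
    ∃ g ∈ relEn n R I, g.val = 1 + Matrix.vecMulVec v w := by
  obtain ⟨ε, hε, hvdef⟩ := hv
  set i0 : Fin n := ⟨0, by omega⟩ with hi0
  set w' : Fin n → R := Matrix.vecMul w ε.val with hw'def
  have hw'I : ∀ j, w' j ∈ I := by
    intro j
    rw [hw'def]
    show ∑ k, w k * ε.val k j ∈ I
    exact sum_mem fun k _ => I.mul_mem_right _ _ (hw k)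
  have hw'0 : w' i0 = 0 := by
    rw [hw'def]
    calc Matrix.vecMul w ε.val i0 = dotProduct w v := by
          rw [hvdef]
          simp [Matrix.vecMul, Matrix.mulVec, dotProduct, Pi.single_apply,
            mul_ite, Finset.sum_ite_eq']
      _ = 0 := hvw
  set u0 := uMv i0 w' hw'0 with hu0
  have hu0mem : u0 ∈ Subgroup.closure (elemGens n R I) :=
    row_transvection_mem I i0 (Finset.univ.erase i0) w'
      (Finset.notMem_erase i0 _)
      (fun j hj => by
        have : j = i0 := by simpa using hj
        rw [this]; exact hw'0)
      hw'I u0 rfl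
  have hu0rel : u0 ∈ relEn n R I :=
    Subgroup.subset_closure ⟨1, one_mem _, u0, hu0mem, by simp⟩
  refine ⟨ε * u0 * ε⁻¹, mul_mem (mul_mem hε hu0rel) (inv_mem hε), ?_⟩
  have : (ε * u0 * ε⁻¹).val = ε.val * (1 + Mv i0 w') * (ε⁻¹).val := rfl
  rw [this, mul_add, mul_one, add_mul, Units.mul_inv]
  congr 1
  rw [Mv, myMul_vecMulVec, ← hvdef, myVecMulVec_mul, hw'def, Matrix.vecMul_vecMul,
    Units.mul_inv, Matrix.vecMul_one]
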